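/- For any natural number p ≥ 2, Σ_{v=1}^{⌊(p-2)/2⌋} 4·3^{v-1} · Σ_{r=1}^{p-2v} 3^{r-1} ≤ (3^p - 4(3^{p/2} - 1) - 1)/3, and the limit as p → ∞ of [(3^p - 4·3^{p/2} + 3)/3 · (3/2)(3^{p-1} - 1)] / (2·3^p - 1)^2 equals 1/24. -/

import Mathlib

open Filter Finset

lemma mySumInner (m : ℕ) : ∑ r ∈ Icc 1 m, (3:ℝ)^(r-1) = ((3:ℝ)^m - 1)/2 := by
  induction m with
  | zero => simp
  | succ n ih =>
    rw [Finset.sum_Icc_succ_top (by omega), ih]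
    have : n + 1 - 1 = n := by omega
    rw [this, pow_succ]
    ring

lemma outer_sum (V p : ℕ) (h : 2*V + 2 ≤ p) :
    ∑ v ∈ Icc 1 V, (4 * (3:ℝ)^(v-1) * (((3:ℝ)^(p - 2*v) - 1)/2))
      = (3:ℝ)^(p-1) - (3:ℝ)^(p-1-V) - (3:ℝ)^V + 1 := by
  induction V with
  | zero => simp
  | succ W ih =>
    rw [Finset.sum_Icc_succ_top (by omega), ih (by omega)]
    obtain ⟨k, rfl⟩ : ∃ k, p = 2*W + 4 + k := ⟨p - (2*W+4), by omega⟩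
    have e1 : 2*W + 4 + k - 2*(W+1) = k + 2 := by omega
    have e2 : 2*W + 4 + k - 1 = 2*W + 3 + k := by omega
    have e3 : 2*W + 3 + k - W = W + 3 + k := by omega
    have e4 : 2*W + 3 + k - (W+1) = W + 2 + k := by omega
    have e5 : W + 1 - 1 = W := by omega
    rw [e1, e2, e3, e4, e5]
    ring

lemma part1 (p : ℕ) (hp : 2 ≤ p) :
    ∑ v ∈ Finset.Icc 1 ((p - 2) / 2),
        (4 * (3 : ℝ) ^ (v - 1) * ∑ r ∈ Finset.Icc 1 (p - 2 * v), (3 : ℝ) ^ (r - 1)) ≤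
      ((3 : ℝ) ^ (p : ℕ) - 4 * ((3 : ℝ) ^ ((p : ℝ) / 2) - 1) - 1) / 3 := by
  have hrw : ∑ v ∈ Finset.Icc 1 ((p - 2) / 2),
        (4 * (3 : ℝ) ^ (v - 1) * ∑ r ∈ Finset.Icc 1 (p - 2 * v), (3 : ℝ) ^ (r - 1))
      = (3:ℝ)^(p-1) - (3:ℝ)^(p-1-(p-2)/2) - (3:ℝ)^((p-2)/2) + 1 := by
    rw [← outer_sum ((p-2)/2) p (by omega)]
    exact Finset.sum_congr rfl fun v _ => by rw [mySumInner]
  rw [hrw]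
  have hp3 : (3:ℝ)^p = 3 * (3:ℝ)^(p-1) := by
    rw [← pow_succ']
    congr 1
    omega
  have key : 4 * (3:ℝ)^((p:ℝ)/2) ≤ 3 * ((3:ℝ)^(p-1-(p-2)/2) + (3:ℝ)^((p-2)/2)) := by
    rcases Nat.even_or_odd p with ⟨k, hk⟩ | ⟨k, hk⟩
    · obtain ⟨j, rfl⟩ : ∃ j, k = j + 1 := ⟨k - 1, by omega⟩
      subst hk
      have e1 : (j+1) + (j+1) - 1 - ((j+1)+(j+1)-2)/2 = j + 1 := by omega
      have e2 : ((j+1)+(j+1)-2)/2 = j := by omega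
      have e3 : ((((j+1)+(j+1) : ℕ)):ℝ)/2 = ((j+1 : ℕ):ℝ) := by push_cast; ring
      rw [e1, e2, e3, Real.rpow_natCast]
      have h4 : (3:ℝ)^(j+1) = 3 * 3^j := by rw [pow_succ]; ring
      linarith
    · obtain ⟨j, rfl⟩ : ∃ j, k = j + 1 := ⟨k - 1, by omega⟩
      subst hk
      have e1 : 2*(j+1) + 1 - 1 - (2*(j+1)+1-2)/2 = j + 2 := by omega
      have e2 : (2*(j+1)+1-2)/2 = j := by omega
      have e3 : (((2*(j+1)+1 : ℕ)):ℝ)/2 = ((j+1 : ℕ):ℝ) + 1/2 := by push_cast; ring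
      rw [e1, e2, e3, Real.rpow_add (by norm_num), Real.rpow_natCast,
        ← Real.sqrt_eq_rpow]
      have hs2 : Real.sqrt 3 ≤ 2 := by
        nlinarith [Real.sq_sqrt (by norm_num : (0:ℝ) ≤ 3), Real.sqrt_nonneg 3]
      have hpos : (0:ℝ) < 3^j := by positivity
      have h4 : (3:ℝ)^(j+1) = 3 * 3^j := by rw [pow_succ]; ring
      have h5 : (3:ℝ)^(j+2) = 9 * 3^j := by rw [pow_add]; ring
      nlinarith [Real.sqrt_nonneg 3]
  linarith

lemma key_eq (p : ℕ) :
    (((3 : ℝ) ^ (p : ℕ) - 4 * (3 : ℝ) ^ ((p : ℝ) / 2) + 3) / 3 *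
        (3 / 2 * ((3 : ℝ) ^ ((p : ℤ) - 1) - 1))) /
      (2 * (3 : ℝ) ^ (p : ℕ) - 1) ^ 2
    = (((1 - 4 * ((Real.sqrt 3)⁻¹)^p + 3 * ((3:ℝ)⁻¹)^p) / 3) *
        (3 / 2 * (1/3 - ((3:ℝ)⁻¹)^p))) / (2 - ((3:ℝ)⁻¹)^p)^2 := by
  have hb : (0:ℝ) < Real.sqrt 3 := Real.sqrt_pos.mpr (by norm_num)
  have hb2 : Real.sqrt 3 * Real.sqrt 3 = 3 := Real.mul_self_sqrt (by norm_num)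
  have ha : (0:ℝ) < 3^p := by positivity
  have hba : (Real.sqrt 3)^p * (Real.sqrt 3)^p = 3^p := by
    rw [← mul_pow, hb2]
  have hsqrt : (3:ℝ)^((p:ℝ)/2) = Real.sqrt 3 ^ p := by
    rw [show (p:ℝ)/2 = (1/2)*p by ring, Real.rpow_mul (by norm_num),
      Real.rpow_natCast, ← Real.sqrt_eq_rpow]
  have hz : (3:ℝ)^((p:ℤ)-1) = 3^p / 3 := by
    rw [zpow_sub₀ (by norm_num), zpow_natCast, zpow_one]
  have hbp : (0:ℝ) < (Real.sqrt 3)^p := by positivity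
  have hden : (2 * (3:ℝ)^p - 1) ≠ 0 := by nlinarith [one_le_pow₀ (by norm_num : (1:ℝ) ≤ 3) (n := p)]
  have hden2 : (2 - ((3:ℝ)⁻¹)^p) ≠ 0 := by
    have : ((3:ℝ)⁻¹)^p ≤ 1 := pow_le_one₀ (by norm_num) (by norm_num)
    nlinarith
  rw [hsqrt, hz, inv_pow, inv_pow]
  rw [← hba] at hden ⊢
  have hs : (Real.sqrt 3)^p ≠ 0 := hbp.ne'
  have hd3 : 2 * (Real.sqrt 3 ^ p * Real.sqrt 3 ^ p) - 1 ≠ 0 := hden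
  field_simp

theorem stmt_3 :
    (∀ p : ℕ, 2 ≤ p →
      ∑ v ∈ Finset.Icc 1 ((p - 2) / 2),
          (4 * (3 : ℝ) ^ (v - 1) * ∑ r ∈ Finset.Icc 1 (p - 2 * v), (3 : ℝ) ^ (r - 1)) ≤
        ((3 : ℝ) ^ (p : ℕ) - 4 * ((3 : ℝ) ^ ((p : ℝ) / 2) - 1) - 1) / 3) ∧
    Tendsto (fun p : ℕ =>
        (((3 : ℝ) ^ (p : ℕ) - 4 * (3 : ℝ) ^ ((p : ℝ) / 2) + 3) / 3 *
            (3 / 2 * ((3 : ℝ) ^ ((p : ℤ) - 1) - 1))) /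
          (2 * (3 : ℝ) ^ (p : ℕ) - 1) ^ 2)
      atTop (nhds (1 / 24)) := by
  refine ⟨part1, ?_⟩
  have hsq : (1:ℝ) < Real.sqrt 3 := by
    nlinarith [Real.sq_sqrt (by norm_num : (0:ℝ) ≤ 3), Real.sqrt_nonneg 3]
  have ht : Tendsto (fun p : ℕ => ((3:ℝ)⁻¹)^p) atTop (nhds 0) :=
    tendsto_pow_atTop_nhds_zero_of_lt_one (by norm_num) (by norm_num)
  have hs : Tendsto (fun p : ℕ => ((Real.sqrt 3)⁻¹)^p) atTop (nhds 0) :=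
    tendsto_pow_atTop_nhds_zero_of_lt_one (by positivity)
      (by rw [inv_lt_one_iff₀]; right; exact hsq)
  have H : Tendsto (fun p : ℕ =>
      (((1 - 4 * ((Real.sqrt 3)⁻¹)^p + 3 * ((3:ℝ)⁻¹)^p) / 3) *
        (3 / 2 * (1/3 - ((3:ℝ)⁻¹)^p))) / (2 - ((3:ℝ)⁻¹)^p)^2) atTop
      (nhds ((((1 - 4*0 + 3*0) / 3) * (3/2 * (1/3 - 0))) / (2 - (0:ℝ))^2)) := by
    exact (((((tendsto_const_nhds.sub (hs.const_mul 4)).add (ht.const_mul 3)).div_const 3).mul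
      ((tendsto_const_nhds.sub ht).const_mul (3/2))).div
      ((tendsto_const_nhds.sub ht).pow 2) (by norm_num))
  have : ((((1:ℝ) - 4*0 + 3*0) / 3) * (3/2 * (1/3 - 0))) / (2 - (0:ℝ))^2 = 1/24 := by norm_num
  rw [this] at H
  exact H.congr fun p => (key_eq p).symm
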